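/- Let G be a chordal graph and let S ⊆ V(G) induce a subgraph with at least two components of size ≥ 2, with S maximal (by inclusion) with this property. Then V(G) \ S is a clique. -/

import Mathlib

open SimpleGraph

/-- A b-coloring of `G` with `k` colors: a proper coloring using all `k` colors in which
every color class contains a b-vertex, i.e. a vertex with a neighbour of every other color. -/
def IsBColoring {V : Type*} (G : SimpleGraph V) {k : ℕ} (c : V → Fin k) : Prop :=
  (∀ ⦃u v : V⦄, G.Adj u v → c u ≠ c v) ∧
  ∀ i : Fin k, ∃ u : V, c u = i ∧ ∀ j : Fin k, j ≠ i → ∃ v : V, G.Adj u v ∧ c v = j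

/-- The b-chromatic number: the largest `k` such that `G` admits a b-coloring with `k` colors. -/
noncomputable def bChromaticNumber {V : Type*} (G : SimpleGraph V) : ℕ :=
  sSup {k : ℕ | ∃ c : V → Fin k, IsBColoring G c}

/-- `G` contains an induced copy of `H`. -/
def HasInducedCopy {V : Type*} {W : Type*} (G : SimpleGraph V) (H : SimpleGraph W) : Prop :=
  ∃ f : W → V, Function.Injective f ∧ ∀ a b : W, G.Adj (f a) (f b) ↔ H.Adj a b

/-- `G` contains an induced (chordless) cycle on `n` vertices. -/
def HasInducedCycle {V : Type*} (G : SimpleGraph V) (n : ℕ) : Prop :=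
  ∃ f : ZMod n → V, Function.Injective f ∧
    ∀ i j : ZMod n, G.Adj (f i) (f j) ↔ (j = i + 1 ∨ i = j + 1)

/-- A graph is chordal iff it has no induced cycle of length at least 4. -/
def IsChordalGraph {V : Type*} (G : SimpleGraph V) : Prop :=
  ∀ n : ℕ, 4 ≤ n → ¬ HasInducedCycle G n

/-- The graph on `Fin n` with the given edge list. -/
def graphOfList (n : ℕ) (E : List (Fin n × Fin n)) : SimpleGraph (Fin n) :=
  SimpleGraph.fromRel (fun a b => (a, b) ∈ E)

/-- `G[S]` has at least two connected components with at least two vertices each. -/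
def HasTwoBigComponents {V : Type*} (G : SimpleGraph V) (S : Set V) : Prop :=
  ∃ C₁ C₂ : (G.induce S).ConnectedComponent,
    C₁ ≠ C₂ ∧ C₁.supp.Nontrivial ∧ C₂.supp.Nontrivial

section ChordalHelpers

variable {V : Type*} {G : SimpleGraph V}

/-- The walk consisting of the first `n` darts of a walk. -/
private def Wtake {u v : V} : (p : G.Walk u v) → (n : ℕ) → G.Walk u (p.getVert n)
  | p, 0 => Walk.nil.copy rfl (p.getVert_zero).symm
  | .nil, _ + 1 => Walk.nil.copy rfl (Walk.getVert_of_length_le _ (by simp)).symm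
  | .cons h q, n + 1 => (Walk.cons h (Wtake q n)).copy rfl (Walk.getVert_cons_succ q h).symm

private lemma length_Wtake {u v : V} (p : G.Walk u v) (n : ℕ) :
    (Wtake p n).length = min n p.length := by
  induction p generalizing n with
  | nil => cases n <;> simp [Wtake]
  | cons h q ih =>
    cases n with
    | zero => simp [Wtake]
    | succ n => simp [Wtake, ih]

private lemma length_Wdrop {u v : V} (p : G.Walk u v) (n : ℕ) :
    (p.drop n).length = p.length - n := by
  induction p generalizing n with
  | nil => cases n <;> simp [Walk.drop]
  | cons h q ih =>
    cases n with
    | zero => simp [Walk.drop]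
    | succ n => simp [Walk.drop, ih]

private lemma min_walk_no_shortcut {u v : V} {p : G.Walk u v}
    (hmin : ∀ q : G.Walk u v, p.length ≤ q.length) {i j : ℕ} (hij : i < j) (hj : j ≤ p.length)
    (h : p.getVert i = p.getVert j ∨ (i + 1 < j ∧ G.Adj (p.getVert i) (p.getVert j))) :
    False := by
  rcases h with heq | ⟨hij1, hadj⟩
  · have := hmin (((Wtake p i).copy rfl heq).append (p.drop j))
    rw [Walk.length_append, Walk.length_copy, length_Wtake, length_Wdrop] at this
    omega
  · have := hmin ((Wtake p i).append (Walk.cons hadj (p.drop j)))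
    rw [Walk.length_append, Walk.length_cons, length_Wtake, length_Wdrop] at this
    omega

private lemma min_walk_getVert_inj {u v : V} {p : G.Walk u v}
    (hmin : ∀ q : G.Walk u v, p.length ≤ q.length) {i j : ℕ}
    (hi : i ≤ p.length) (hj : j ≤ p.length) (h : p.getVert i = p.getVert j) : i = j := by
  rcases lt_trichotomy i j with hlt | he | hlt
  · exact absurd (min_walk_no_shortcut hmin hlt hj (Or.inl h)) not_false
  · exact he
  · exact absurd (min_walk_no_shortcut hmin hlt hi (Or.inl h.symm)) not_false

private lemma min_walk_adj_indices {u v : V} {p : G.Walk u v}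
    (hmin : ∀ q : G.Walk u v, p.length ≤ q.length) {i j : ℕ}
    (hi : i ≤ p.length) (hj : j ≤ p.length)
    (hadj : G.Adj (p.getVert i) (p.getVert j)) : j = i + 1 ∨ i = j + 1 := by
  have hne : i ≠ j := fun he => G.irrefl (he ▸ hadj)
  rcases lt_trichotomy i j with hlt | he | hlt
  · left
    by_contra hc
    exact min_walk_no_shortcut hmin hlt hj (Or.inr ⟨by omega, hadj⟩)
  · exact absurd he hne
  · right
    by_contra hc
    exact min_walk_no_shortcut hmin hlt hi (Or.inr ⟨by omega, hadj.symm⟩)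

private lemma exists_min_walk {u v : V} (h : G.Reachable u v) :
    ∃ p : G.Walk u v, ∀ q : G.Walk u v, p.length ≤ q.length := by
  classical
  obtain ⟨w⟩ := h
  have hP : ∃ n, ∃ p : G.Walk u v, p.length = n := ⟨w.length, w, rfl⟩
  obtain ⟨p, hp⟩ := Nat.find_spec hP
  exact ⟨p, fun q => hp ▸ Nat.find_min' hP ⟨q, rfl⟩⟩

private lemma walk_closed {A : Set V} (hA : ∀ ⦃a b : V⦄, G.Adj a b → a ∈ A → b ∈ A)
    {u v : V} (p : G.Walk u v) (hu : u ∈ A) : ∀ z ∈ p.support, z ∈ A := by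
  induction p with
  | nil => intro z hz; simp at hz; subst hz; exact hu
  | cons h q ih =>
    intro z hz
    rw [Walk.support_cons, List.mem_cons] at hz
    rcases hz with rfl | hz
    · exact hu
    · exact ih (hA h hu) z hz

private lemma reach_transfer {A B : Set V} {x y : ↥A} (p : (G.induce A).Walk x y)
    (hp : ∀ z ∈ p.support, ↑z ∈ B) :
    (G.induce B).Reachable ⟨x, hp x p.start_mem_support⟩ ⟨y, hp y p.end_mem_support⟩ := by
  induction p with
  | nil => rfl
  | @cons a b c h q ih =>
    have hB : ∀ z ∈ q.support, ↑z ∈ B := fun z hz => hp z (by simp [hz])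
    have h1 : (G.induce B).Adj ⟨a, hp a (by simp)⟩ ⟨b, hB b q.start_mem_support⟩ := by
      simpa using (by simpa using h : G.Adj ↑a ↑b)
    exact (h1.reachable).trans (ih hB)

private lemma exists_nbr (S : Set V)
    (hmax : ∀ S' : Set V, S ⊆ S' → HasTwoBigComponents G S' → S' = S)
    {w : V} (hw : w ∉ S) (C C' : (G.induce S).ConnectedComponent)
    (hCC' : C' ≠ C) (hC : C.supp.Nontrivial) (hC' : C'.supp.Nontrivial) :
    ∃ x : ↥S, G.Adj w ↑x ∧ (G.induce S).connectedComponentMk x = C := by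
  by_contra hcon
  push_neg at hcon
  set S' : Set V := insert w S with hS'
  have hsub : S ⊆ S' := Set.subset_insert w S
  let ι : ↥S → ↥S' := fun x => ⟨↑x, hsub x.2⟩
  have hreach : ∀ a b : ↥S, (G.induce S).Reachable a b →
      (G.induce S').Reachable (ι a) (ι b) := by
    intro a b h
    obtain ⟨p⟩ := h
    have hp : ∀ z ∈ p.support, ↑z ∈ S' := fun z _ => hsub z.2
    exact reach_transfer p hp
  obtain ⟨c, hc, cc, hcc, hccne⟩ := hC
  obtain ⟨c', hc', cc', hcc', hccne'⟩ := hC'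
  rw [ConnectedComponent.mem_supp_iff] at hc hcc hc' hcc'
  have hιinj : Function.Injective ι := by
    intro a b h
    rwa [Subtype.ext_iff] at h ⊢
  have hbig : HasTwoBigComponents G S' := by
    refine ⟨(G.induce S').connectedComponentMk (ι c),
      (G.induce S').connectedComponentMk (ι c'), ?_, ?_, ?_⟩
    · intro h
      rw [ConnectedComponent.eq] at h
      obtain ⟨p⟩ := h
      set T : Set ↥S' := {x | ∃ hx : ↑x ∈ S, (G.induce S).connectedComponentMk ⟨↑x, hx⟩ = C}
        with hT
      have hclosed : ∀ ⦃a b : ↥S'⦄, (G.induce S').Adj a b → a ∈ T → b ∈ T := by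
        intro a b hab ha
        obtain ⟨haS, haC⟩ := ha
        have hadj : G.Adj ↑a ↑b := by simpa using hab
        rcases b.2 with hbw | hbS
        · exact absurd haC (hcon ⟨↑a, haS⟩ (hbw ▸ hadj.symm))
        · refine ⟨hbS, ?_⟩
          have : (G.induce S).Adj ⟨↑a, haS⟩ ⟨↑b, hbS⟩ := by simpa using hadj
          exact (ConnectedComponent.sound this.symm.reachable).trans haC
      have hstart : ι c ∈ T := ⟨c.2, by simpa using hc⟩
      have hend := walk_closed hclosed p hstart (ι c') p.end_mem_support
      obtain ⟨h1, h2⟩ := hend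
      have : (G.induce S).connectedComponentMk c' = C := by simpa using h2
      exact hCC' (hc' ▸ this ▸ rfl)
    · refine ⟨ι c, rfl, ι cc, ?_, fun h => hccne (hιinj h)⟩
      rw [ConnectedComponent.mem_supp_iff, ConnectedComponent.eq]
      exact hreach cc c (ConnectedComponent.eq.mp (hcc.trans hc.symm))
    · refine ⟨ι c', rfl, ι cc', ?_, fun h => hccne' (hιinj h)⟩
      rw [ConnectedComponent.mem_supp_iff, ConnectedComponent.eq]
      exact hreach cc' c' (ConnectedComponent.eq.mp (hcc'.trans hc'.symm))
  have := hmax S' hsub hbig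
  exact hw (this ▸ Set.mem_insert w S)

private lemma hasInducedCycle_of_fun (G : SimpleGraph V) (n : ℕ) (hn : 2 ≤ n) (g : ℕ → V)
    (hinj : ∀ a < n, ∀ b < n, g a = g b → a = b)
    (hadj : ∀ a < n, ∀ b < n, (G.Adj (g a) (g b) ↔ (b = (a + 1) % n ∨ a = (b + 1) % n))) :
    HasInducedCycle G n := by
  haveI : NeZero n := ⟨by omega⟩
  refine ⟨fun i => g i.val, ?_, ?_⟩
  · intro i j hij
    exact ZMod.val_injective n (hinj _ (ZMod.val_lt i) _ (ZMod.val_lt j) hij)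
  · intro i j
    have hv1 : (1 : ZMod n).val = 1 := ZMod.val_one'' (by omega)
    have key : ∀ i j : ZMod n, j = i + 1 ↔ j.val = (i.val + 1) % n := by
      intro i j
      constructor
      · rintro rfl; rw [ZMod.val_add, hv1]
      · intro h
        apply ZMod.val_injective n
        rw [ZMod.val_add, hv1, h]
    rw [hadj _ (ZMod.val_lt i) _ (ZMod.val_lt j), key i j, key j i]

end ChordalHelpers

/-- If `S` is maximal inducing at least two big components in a chordal graph,
then the complement of `S` is a clique. -/
theorem compl_isClique {V : Type*} [Fintype V] (G : SimpleGraph V)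
    (hchordal : IsChordalGraph G) (S : Set V) (hS : HasTwoBigComponents G S)
    (hmax : ∀ S' : Set V, S ⊆ S' → HasTwoBigComponents G S' → S' = S) :
    G.IsClique {v : V | v ∉ S} := by
  classical
  rw [isClique_iff]
  intro u hu v hv huv
  by_contra hne
  obtain ⟨C₁, C₂, hC12, hC1, hC2⟩ := hS
  simp only [Set.mem_setOf_eq] at hu hv
  obtain ⟨x₁, hx₁adj, hx₁C⟩ := exists_nbr S hmax hu C₁ C₂ hC12.symm hC1 hC2
  obtain ⟨x₂, hx₂adj, hx₂C⟩ := exists_nbr S hmax hu C₂ C₁ hC12 hC2 hC1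
  obtain ⟨y₁, hy₁adj, hy₁C⟩ := exists_nbr S hmax hv C₁ C₂ hC12.symm hC1 hC2
  obtain ⟨y₂, hy₂adj, hy₂C⟩ := exists_nbr S hmax hv C₂ C₁ hC12 hC2 hC1
  -- the two component vertex sets, and the two path-arenas
  set A₁ : Set V := Subtype.val '' C₁.supp with hA₁
  set A₂ : Set V := Subtype.val '' C₂.supp with hA₂
  have hA₁S : A₁ ⊆ S := by rintro z ⟨w, _, rfl⟩; exact w.2
  have hA₂S : A₂ ⊆ S := by rintro z ⟨w, _, rfl⟩; exact w.2
  have hdisj : ∀ z, z ∈ A₁ → z ∈ A₂ → False := by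
    rintro z ⟨w1, hw1, rfl⟩ ⟨w2, hw2, hw⟩
    rw [ConnectedComponent.mem_supp_iff] at hw1 hw2
    have : w2 = w1 := Subtype.ext hw
    exact hC12 (hw1 ▸ this ▸ hw2 ▸ rfl)
  have hnocross : ∀ a b, a ∈ A₁ → b ∈ A₂ → ¬ G.Adj a b := by
    rintro a b ⟨w1, hw1, rfl⟩ ⟨w2, hw2, rfl⟩ hab
    rw [ConnectedComponent.mem_supp_iff] at hw1 hw2
    have : (G.induce S).Adj w1 w2 := by simpa using hab
    exact hC12 (hw1 ▸ hw2 ▸ ConnectedComponent.sound this.reachable)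
  -- reachability of u and v inside each arena
  have harena : ∀ (A : Set V) (C : (G.induce S).ConnectedComponent), A = Subtype.val '' C.supp →
      ∀ (x y : ↥S), G.Adj u ↑x → G.Adj v ↑y →
      (G.induce S).connectedComponentMk x = C → (G.induce S).connectedComponentMk y = C →
      ∃ hu' : u ∈ A ∪ {u, v}, ∃ hv' : v ∈ A ∪ {u, v},
        (G.induce (A ∪ {u, v})).Reachable ⟨u, hu'⟩ ⟨v, hv'⟩ := by
    intro A C hAC x y hux hvy hxC hyC
    have hu' : u ∈ A ∪ {u, v} := Or.inr (by simp)
    have hv' : v ∈ A ∪ {u, v} := Or.inr (by simp)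
    refine ⟨hu', hv', ?_⟩
    have hxA : ↑x ∈ A ∪ {u, v} := Or.inl (hAC ▸ ⟨x, (ConnectedComponent.mem_supp_iff _ _).mpr hxC, rfl⟩)
    have hyA : ↑y ∈ A ∪ {u, v} := Or.inl (hAC ▸ ⟨y, (ConnectedComponent.mem_supp_iff _ _).mpr hyC, rfl⟩)
    have h1 : (G.induce (A ∪ {u, v})).Adj ⟨u, hu'⟩ ⟨↑x, hxA⟩ := by simpa using hux
    have h2 : (G.induce (A ∪ {u, v})).Adj ⟨↑y, hyA⟩ ⟨v, hv'⟩ := by simpa using hvy.symm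
    obtain ⟨p⟩ := ConnectedComponent.eq.mp (hxC.trans hyC.symm)
    have hp : ∀ z ∈ p.support, ↑z ∈ A ∪ {u, v} := by
      have := walk_closed (A := {z : ↥S | (G.induce S).connectedComponentMk z = C})
        (fun a b hab ha => (ConnectedComponent.sound hab.symm.reachable).trans ha) p hxC
      intro z hz
      exact Or.inl (hAC ▸ ⟨z, (ConnectedComponent.mem_supp_iff _ _).mpr (this z hz), rfl⟩)
    exact (h1.reachable.trans (reach_transfer p hp)).trans h2.reachable
  obtain ⟨hu1, hv1, hreach1⟩ := harena A₁ C₁ hA₁ x₁ y₁ hx₁adj hy₁adj hx₁C hy₁C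
  obtain ⟨hu2, hv2, hreach2⟩ := harena A₂ C₂ hA₂ x₂ y₂ hx₂adj hy₂adj hx₂C hy₂C
  obtain ⟨p₁, hmin₁⟩ := exists_min_walk hreach1
  obtain ⟨p₂, hmin₂⟩ := exists_min_walk hreach2
  set d₁ := p₁.length with hd₁
  set d₂ := p₂.length with hd₂
  set T₁ : Set V := A₁ ∪ {u, v} with hT₁
  set T₂ : Set V := A₂ ∪ {u, v} with hT₂
  -- lengths are at least 2
  have hlen : ∀ (T : Set V) (hu' : u ∈ T) (hv' : v ∈ T)
      (p : (G.induce T).Walk ⟨u, hu'⟩ ⟨v, hv'⟩), 2 ≤ p.length := by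
    intro T hu' hv' p
    by_contra h
    push_neg at h
    interval_cases h' : p.length
    · exact huv (congrArg Subtype.val (Walk.eq_of_length_eq_zero h'))
    · exact hne (by simpa using Walk.adj_of_length_eq_one h')
  have hd₁2 : 2 ≤ d₁ := hlen T₁ hu1 hv1 p₁
  have hd₂2 : 2 ≤ d₂ := hlen T₂ hu2 hv2 p₂
  set n := d₁ + d₂ with hn
  -- interior vertices lie in the component sets
  have hgvinj : ∀ {T : Set V} (x y : ↥T), (x : V) = ↑y → x = y := fun x y h => Subtype.ext h
  have hint₁ : ∀ m, 0 < m → m < d₁ → ↑(p₁.getVert m) ∈ A₁ := by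
    intro m hm0 hmd
    rcases (p₁.getVert m).2 with h | h
    · exact h
    · exfalso
      rcases h with h | h
      · have : p₁.getVert m = p₁.getVert 0 := Subtype.ext (by rw [p₁.getVert_zero]; exact h)
        have := min_walk_getVert_inj hmin₁ (by omega) (by omega) this
        omega
      · have : p₁.getVert m = p₁.getVert d₁ :=
          Subtype.ext (by rw [hd₁, p₁.getVert_length]; exact h)
        have := min_walk_getVert_inj hmin₁ (by omega) le_rfl this
        omega
  have hint₂ : ∀ m, 0 < m → m < d₂ → ↑(p₂.getVert m) ∈ A₂ := by
    intro m hm0 hmd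
    rcases (p₂.getVert m).2 with h | h
    · exact h
    · exfalso
      rcases h with h | h
      · have : p₂.getVert m = p₂.getVert 0 := Subtype.ext (by rw [p₂.getVert_zero]; exact h)
        have := min_walk_getVert_inj hmin₂ (by omega) (by omega) this
        omega
      · have : p₂.getVert m = p₂.getVert d₂ :=
          Subtype.ext (by rw [hd₂, p₂.getVert_length]; exact h)
        have := min_walk_getVert_inj hmin₂ (by omega) le_rfl this
        omega
  -- the cyclic sequence of vertices
  set g : ℕ → V := fun a => if a ≤ d₁ then ↑(p₁.getVert a) else ↑(p₂.getVert (n - a)) with hg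
  have hgle : ∀ a, a ≤ d₁ → g a = ↑(p₁.getVert a) := fun a h => if_pos h
  have hggt : ∀ a, d₁ < a → g a = ↑(p₂.getVert (n - a)) := fun a h => if_neg (by omega)
  have hp₁0 : (p₁.getVert 0 : V) = u := by rw [p₁.getVert_zero]
  have hp₁d : (p₁.getVert d₁ : V) = v := by rw [hd₁, p₁.getVert_length]
  have hp₂0 : (p₂.getVert 0 : V) = u := by rw [p₂.getVert_zero]
  have hp₂d : (p₂.getVert d₂ : V) = v := by rw [hd₂, p₂.getVert_length]
  have hg0 : g 0 = u := (hgle 0 (by omega)).trans hp₁0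
  have hgd : g d₁ = v := (hgle d₁ le_rfl).trans hp₁d
  have hg0' : g 0 = ↑(p₂.getVert 0) := hg0.trans hp₂0.symm
  have hgd' : g d₁ = ↑(p₂.getVert d₂) := hgd.trans hp₂d.symm
  have hgA₂ : ∀ a, d₁ < a → a < n → g a ∈ A₂ := by
    intro a h1 h2
    rw [hggt a h1]
    exact hint₂ (n - a) (by omega) (by omega)
  have liftAdj : ∀ {T : Set V} {x y : ↥T}, (G.induce T).Adj x y → G.Adj ↑x ↑y :=
    fun h => by simpa using h
  have toAdj : ∀ {T : Set V} {x y : ↥T}, G.Adj ↑x ↑y → (G.induce T).Adj x y :=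
    fun h => by simpa using h
  -- injectivity
  have mixedne : ∀ a b, a ≤ d₁ → d₁ < b → b < n → g a ≠ g b := by
    intro a b ha hb1 hb2 h
    have hbA : g b ∈ A₂ := hgA₂ b hb1 hb2
    rcases Nat.eq_zero_or_pos a with rfl | ha0
    · rw [hg0] at h
      exact hu (hA₂S (h ▸ hbA))
    · by_cases had : a = d₁
      · rw [had, hgd] at h
        exact hv (hA₂S (h ▸ hbA))
      · have h1 : g a ∈ A₁ := by
          rw [hgle a ha]
          exact hint₁ a ha0 (lt_of_le_of_ne ha had)
        exact hdisj (g a) h1 (h ▸ hbA)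
  have hinj : ∀ a, a < n → ∀ b, b < n → g a = g b → a = b := by
    intro a ha b hb h
    by_cases h1 : a ≤ d₁ <;> by_cases h2 : b ≤ d₁
    · exact min_walk_getVert_inj hmin₁ h1 h2
        (Subtype.ext ((hgle a h1).symm.trans (h.trans (hgle b h2))))
    · exact absurd h (mixedne a b h1 (by omega) hb)
    · exact absurd h.symm (mixedne b a h2 (by omega) ha)
    · have := min_walk_getVert_inj hmin₂ (i := n - a) (j := n - b) (by omega) (by omega)
        (Subtype.ext ((hggt a (by omega)).symm.trans (h.trans (hggt b (by omega)))))
      omega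
  -- forward adjacency analysis
  have fwd : ∀ a b, a < n → b < n → G.Adj (g a) (g b) →
      (b = a + 1 ∨ a = b + 1 ∨ (a = 0 ∧ b = n - 1) ∨ (b = 0 ∧ a = n - 1)) := by
    have mixed : ∀ a b, a ≤ d₁ → d₁ < b → b < n → G.Adj (g a) (g b) →
        (b = a + 1 ∨ (a = 0 ∧ b = n - 1)) := by
      intro a b ha hb1 hb2 hadj
      rcases Nat.eq_zero_or_pos a with rfl | ha0
      · have hadj' : G.Adj ↑(p₂.getVert 0) ↑(p₂.getVert (n - b)) := by
          rw [← hg0', ← hggt b hb1]; exact hadj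
        have := min_walk_adj_indices hmin₂ (i := 0) (j := n - b) (Nat.zero_le _) (by omega)
          (toAdj hadj')
        right
        exact ⟨rfl, by omega⟩
      · by_cases had : a = d₁
        · subst had
          have hadj' : G.Adj ↑(p₂.getVert d₂) ↑(p₂.getVert (n - b)) := by
            rw [← hgd', ← hggt b hb1]; exact hadj
          have := min_walk_adj_indices hmin₂ (i := d₂) (j := n - b) le_rfl (by omega)
            (toAdj hadj')
          left; omega
        · exfalso
          have h1 : g a ∈ A₁ := by
            rw [hgle a ha]
            exact hint₁ a ha0 (lt_of_le_of_ne ha had)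
          exact hnocross _ _ h1 (hgA₂ b hb1 hb2) hadj
    intro a b ha hb hadj
    by_cases h1 : a ≤ d₁ <;> by_cases h2 : b ≤ d₁
    · have hadj' : G.Adj ↑(p₁.getVert a) ↑(p₁.getVert b) := by
        rw [← hgle a h1, ← hgle b h2]; exact hadj
      have := min_walk_adj_indices hmin₁ h1 h2 (toAdj hadj')
      omega
    · have := mixed a b h1 (by omega) hb hadj
      omega
    · have := mixed b a h2 (by omega) ha hadj.symm
      omega
    · have hadj' : G.Adj ↑(p₂.getVert (n - a)) ↑(p₂.getVert (n - b)) := by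
        rw [← hggt a (by omega), ← hggt b (by omega)]; exact hadj
      have := min_walk_adj_indices hmin₂ (i := n - a) (j := n - b) (by omega) (by omega)
        (toAdj hadj')
      omega
  -- backward adjacency construction
  have bsucc : ∀ a, a + 1 < n → G.Adj (g a) (g (a + 1)) := by
    intro a ha
    by_cases h1 : a + 1 ≤ d₁
    · rw [hgle a (by omega), hgle (a + 1) h1]
      exact liftAdj (p₁.adj_getVert_succ (by omega))
    · by_cases h2 : a = d₁
      · rw [h2, hgd', hggt (d₁ + 1) (by omega)]
        have h3 : n - (d₁ + 1) = d₂ - 1 := by omega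
        rw [h3]
        have hadj := p₂.adj_getVert_succ (i := d₂ - 1) (by omega)
        have h4 : d₂ - 1 + 1 = d₂ := by omega
        rw [h4] at hadj
        exact (liftAdj hadj).symm
      · rw [hggt a (by omega), hggt (a + 1) (by omega)]
        have hadj := p₂.adj_getVert_succ (i := n - (a + 1)) (by omega)
        have h4 : n - (a + 1) + 1 = n - a := by omega
        rw [h4] at hadj
        exact (liftAdj hadj).symm
  have bwrap : G.Adj (g (n - 1)) (g 0) := by
    rw [hg0', hggt (n - 1) (by omega)]
    have h4 : n - (n - 1) = 1 := by omega
    rw [h4]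
    exact (liftAdj (p₂.adj_getVert_succ (i := 0) (by omega))).symm
  have ball : ∀ a b, a < n → b < n →
      (b = a + 1 ∨ a = b + 1 ∨ (a = 0 ∧ b = n - 1) ∨ (b = 0 ∧ a = n - 1)) →
      G.Adj (g a) (g b) := by
    intro a b ha hb h
    rcases h with rfl | rfl | ⟨rfl, rfl⟩ | ⟨rfl, rfl⟩
    · exact bsucc a hb
    · exact (bsucc b ha).symm
    · exact bwrap.symm
    · exact bwrap
  -- assemble the induced cycle and contradict chordality
  have hmodsucc : ∀ a, a < n → (a + 1) % n = if a + 1 = n then 0 else a + 1 := by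
    intro a ha
    split
    · next h => rw [h, Nat.mod_self]
    · next h => exact Nat.mod_eq_of_lt (by omega)
  apply hchordal n (by omega)
  apply hasInducedCycle_of_fun G n (by omega) g hinj
  intro a ha b hb
  rw [hmodsucc a ha, hmodsucc b hb]
  constructor
  · intro h
    have := fwd a b ha hb h
    split_ifs <;> omega
  · intro h
    apply ball a b ha hb
    split_ifs at h <;> omega
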